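/- Let N be a net. Then every GR-process P of N is a prefix of a maximal GR-process of N (a process having no proper extension). -/

import Mathlib

open scoped Classical

noncomputable section

/-- A place/transition net: `pre t s` and `post t s` are the arc weights
`F(s,t)` and `F(t,s)` of the flow relation, and `M0` is the initial marking.
Every transition has a finite non-empty set of preplaces and a finite set of
postplaces. -/
structure Net (S : Type*) (T : Type*) where
  pre : T → S → ℕ
  post : T → S → ℕ
  M0 : S → ℕ
  pre_fin : ∀ t, {s | pre t s ≠ 0}.Finite
  pre_ne : ∀ t, ∃ s, pre t s ≠ 0
  post_fin : ∀ t, {s | post t s ≠ 0}.Finite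

namespace Net

variable {S T : Type*}

/-- `•G`: the multiset of preplaces of a finite multiset `G` of transitions,
as a function `S → ℕ`. -/
def preM (N : Net S T) (G : Multiset T) (s : S) : ℕ :=
  (G.map fun t => N.pre t s).sum

/-- `G•`: the multiset of postplaces of a finite multiset `G` of transitions. -/
def postM (N : Net S T) (G : Multiset T) (s : S) : ℕ :=
  (G.map fun t => N.post t s).sum

/-- The (non-empty, finite) multiset `G` of transitions is enabled in marking `M`. -/
def Enabled (N : Net S T) (M : S → ℕ) (G : Multiset T) : Prop :=
  G ≠ 0 ∧ ∀ s, N.preM G s ≤ M s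

/-- `G` is a step from `M` to `M'`. -/
def Step (N : Net S T) (M : S → ℕ) (G : Multiset T) (M' : S → ℕ) : Prop :=
  N.Enabled M G ∧ ∀ s, M' s = M s - N.preM G s + N.postM G s

/-- `M →σ M'`: sequential firing of the word `σ` of transitions. -/
def FireSeq (N : Net S T) : (S → ℕ) → List T → (S → ℕ) → Prop
  | M, [], M' => M' = M
  | M, t :: σ, M' => ∃ M₁, N.Step M {t} M₁ ∧ N.FireSeq M₁ σ M'

/-- `σ` is a firing sequence of `N`. -/
def FS (N : Net S T) (σ : List T) : Prop := ∃ M', N.FireSeq N.M0 σ M'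

/-- `M` is reachable from the initial marking. -/
def Reachable (N : Net S T) (M : S → ℕ) : Prop := ∃ σ, N.FireSeq N.M0 σ M

/-- Two firing sequences are adjacent iff they differ only in the exchange of
two neighbouring transitions that could have been fired in one step. -/
def Adjacent (N : Net S T) (σ ρ : List T) : Prop :=
  N.FS σ ∧ N.FS ρ ∧
    ∃ (σ₁ : List T) (t u : T) (σ₂ : List T) (M : S → ℕ),
      σ = σ₁ ++ t :: u :: σ₂ ∧ ρ = σ₁ ++ u :: t :: σ₂ ∧
      N.FireSeq N.M0 σ₁ M ∧ N.Enabled M (t ::ₘ {u})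

/-- `↔*`: the reflexive transitive closure of adjacency. -/
def AdjEquiv (N : Net S T) : List T → List T → Prop :=
  Relation.ReflTransGen N.Adjacent

/-- A structural conflict net: transitions that can occur together in a step
never share a preplace. -/
def StructuralConflictNet (N : Net S T) : Prop :=
  ∀ t u : T, (∃ M, N.Reachable M ∧ N.Enabled M (t ::ₘ {u})) →
    ∀ s, N.pre t s = 0 ∨ N.pre u s = 0

/-- The finite non-empty multiset `G` of transitions is in (semantic) conflict
in the marking `M`: every `G↾{t}` is enabled but `G` itself is not. -/
def InConflict (N : Net S T) (M : S → ℕ) (G : Multiset T) : Prop :=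
  G ≠ 0 ∧ (∀ t ∈ G, N.Enabled M (Multiset.replicate (G.count t) t)) ∧
    ¬ N.Enabled M G

/-- `N` is (semantic) conflict-free. -/
def ConflictFree (N : Net S T) : Prop :=
  ∀ M, N.Reachable M → ∀ G : Multiset T, ¬ N.InConflict M G

end Net

/-- The type of firing sequences of `N`. -/
def FSeq {S T : Type*} (N : Net S T) := {σ : List T // N.FS σ}

/-- Partial FS-runs: `↔*`-equivalence classes of firing sequences. -/
def PartialFSRun {S T : Type*} (N : Net S T) :=
  Quot (fun σ ρ : FSeq N => N.AdjEquiv σ.1 ρ.1)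

/-- `[σ]`, the `↔*`-equivalence class of a firing sequence. -/
def fsClass {S T : Type*} (N : Net S T) (σ : FSeq N) : PartialFSRun N :=
  Quot.mk _ σ

/-- The prefix order on partial FS-runs: `[σ] ≤ [ρ]` iff
`∃ μ, σ ≤ μ ↔* ρ`. -/
def fsRunLE {S T : Type*} (N : Net S T) (x y : PartialFSRun N) : Prop :=
  ∃ σ ρ : FSeq N, fsClass N σ = x ∧ fsClass N ρ = y ∧
    ∃ μ : List T, σ.1 <+: μ ∧ N.AdjEquiv μ ρ.1

/-- An FS-run: a prefix-closed and directed set of partial FS-runs. -/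
def IsFSRun {S T : Type*} (N : Net S T) (R : Set (PartialFSRun N)) : Prop :=
  (∀ x y, fsRunLE N x y → y ∈ R → x ∈ R) ∧
  (∀ x ∈ R, ∀ y ∈ R, ∃ z ∈ R, fsRunLE N x z ∧ fsRunLE N y z)

/-- An FS-run `R` is conflict-free iff whenever, for every `t` in a finite
non-empty multiset `G`, the class of `σ t^{G(t)}` belongs to `R` and
`M₀ →σ →(G↾{t})`, then `M₀ →σ →G`. -/
def ConflictFreeFSRun {S T : Type*} (N : Net S T)
    (R : Set (PartialFSRun N)) : Prop :=
  ∀ (G : Multiset T) (σ : List T), G ≠ 0 →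
    (∀ t ∈ G,
      (∃ h : N.FS (σ ++ List.replicate (G.count t) t),
        fsClass N ⟨σ ++ List.replicate (G.count t) t, h⟩ ∈ R) ∧
      ∃ M, N.FireSeq N.M0 σ M ∧
        N.Enabled M (Multiset.replicate (G.count t) t)) →
    ∃ M, N.FireSeq N.M0 σ M ∧ N.Enabled M G

/-- The raw data of a candidate (GR-)process of a net with places `S` and
transitions `T`: an occurrence net whose places are drawn from `α` and whose
transitions are drawn from `β`, together with the projections to `S` and `T`. -/
structure RawProc (S T α β : Type*) where
  places : Set α
  transitions : Set β
  flowPT : α → β → ℕ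
  flowTP : β → α → ℕ
  initMark : α → ℕ
  projS : α → S
  projT : β → T

namespace RawProc

variable {S T α β : Type*}

/-- The flow relation of the occurrence net, as a relation on `α ⊕ β`. -/
def flowRel (P : RawProc S T α β) : (α ⊕ β) → (α ⊕ β) → Prop := fun x y =>
  match x, y with
  | Sum.inl p, Sum.inr t => P.flowPT p t ≠ 0
  | Sum.inr t, Sum.inl p => P.flowTP t p ≠ 0
  | _, _ => False

/-- `F⁺`, the transitive closure of the flow relation. -/
def causal (P : RawProc S T α β) : (α ⊕ β) → (α ⊕ β) → Prop :=
  Relation.TransGen P.flowRel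

/-- `P` is finite iff its set of transitions is finite. -/
def FiniteProc (P : RawProc S T α β) : Prop := P.transitions.Finite

/-- `Q` is a prefix of `P` (written `Q ≤ P`): the places and transitions of `Q`
are included in those of `P`, the initial markings coincide, and flow relation
and projection of `Q` are the restrictions of those of `P`. -/
def IsPrefix (Q P : RawProc S T α β) : Prop :=
  Q.places ⊆ P.places ∧ Q.transitions ⊆ P.transitions ∧
  Q.initMark = P.initMark ∧
  (∀ p ∈ Q.places, ∀ t ∈ Q.transitions,
    Q.flowPT p t = P.flowPT p t ∧ Q.flowTP t p = P.flowTP t p) ∧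
  (∀ p ∈ Q.places, Q.projS p = P.projS p) ∧
  (∀ t ∈ Q.transitions, Q.projT t = P.projT t)

/-- Isomorphism of processes of the same net: a bijection between places and
between transitions preserving flow, initial marking and the projections. -/
def Iso (P Q : RawProc S T α β) : Prop :=
  ∃ (fS : α → α) (fT : β → β),
    Set.BijOn fS P.places Q.places ∧ Set.BijOn fT P.transitions Q.transitions ∧
    (∀ p ∈ P.places, ∀ t ∈ P.transitions,
      Q.flowPT (fS p) (fT t) = P.flowPT p t ∧
      Q.flowTP (fT t) (fS p) = P.flowTP t p) ∧
    (∀ p ∈ P.places, Q.initMark (fS p) = P.initMark p) ∧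
    (∀ p ∈ P.places, Q.projS (fS p) = P.projS p) ∧
    (∀ t ∈ P.transitions, Q.projT (fT t) = P.projT t)

/-- `swap(P,p,q)`: exchange the outgoing arcs of the places `p` and `q`. -/
def swap (P : RawProc S T α β) (p q : α) : RawProc S T α β :=
  { P with flowPT := fun x t =>
      if x = p then P.flowPT q t
      else if x = q then P.flowPT p t
      else P.flowPT x t }

/-- One step swapping equivalence `P ≈s Q`: `swap(P,p,q)` is isomorphic to `Q`
for some causally unrelated places `p`, `q` with the same image in the net. -/
def SwapStep (P Q : RawProc S T α β) : Prop :=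
  ∃ p q : α, p ∈ P.places ∧ q ∈ P.places ∧ P.projS p = P.projS q ∧
    ¬ P.causal (Sum.inl p) (Sum.inl q) ∧ ¬ P.causal (Sum.inl q) (Sum.inl p) ∧
    Iso (P.swap p q) Q

/-- `≈s*`: the reflexive transitive closure of one step swapping equivalence. -/
def SwapEquiv : RawProc S T α β → RawProc S T α β → Prop :=
  Relation.ReflTransGen SwapStep

/-- `Lin(P)`: the linearisations of a finite process `P`, i.e. the images under
the projection of the enumerations of its transitions compatible with `F*`. -/
def Lin (P : RawProc S T α β) : Set (List T) :=
  { σ | ∃ ts : List β, ts.Nodup ∧ (∀ t : β, t ∈ ts ↔ t ∈ P.transitions) ∧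
      (∀ (i j : ℕ) (hi : i < ts.length) (hj : j < ts.length),
        Relation.ReflTransGen P.flowRel
          (Sum.inr (ts.get ⟨i, hi⟩)) (Sum.inr (ts.get ⟨j, hj⟩)) → i ≤ j) ∧
      σ = ts.map P.projT }

end RawProc

/-- `P` is a (GR-)process of the net `N`: its underlying net is an occurrence
net (unbranched places, acyclic flow, finite causal pasts, transitions with
finite non-empty presets and finite postsets), the flow, initial marking and
projections are normalised to vanish outside the places/transitions, and the
projection maps the process onto `N` respecting initial marking and arc
weights (counted via the preimages of the projection). -/
structure IsProcessOf {S T α β : Type*} (N : Net S T)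
    (P : RawProc S T α β) : Prop where
  flowPT_dom : ∀ p t, P.flowPT p t ≠ 0 → p ∈ P.places ∧ t ∈ P.transitions
  flowTP_dom : ∀ t p, P.flowTP t p ≠ 0 → p ∈ P.places ∧ t ∈ P.transitions
  initMark_dom : ∀ p, p ∉ P.places → P.initMark p = 0
  pre_place : ∀ p ∈ P.places,
    {t | P.flowTP t p ≠ 0}.Subsingleton ∧ ∀ t, P.flowTP t p ≤ 1
  post_place : ∀ p ∈ P.places,
    {t | P.flowPT p t ≠ 0}.Subsingleton ∧ ∀ t, P.flowPT p t ≤ 1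
  init_one : ∀ p ∈ P.places, (∀ t, P.flowTP t p = 0) → P.initMark p = 1
  init_zero : ∀ p ∈ P.places, (∃ t, P.flowTP t p ≠ 0) → P.initMark p = 0
  acyclic : ∀ x, ¬ P.causal x x
  finite_past : ∀ t ∈ P.transitions,
    {u : β | P.causal (Sum.inr u) (Sum.inr t)}.Finite
  t_pre_fin : ∀ t ∈ P.transitions, {p | P.flowPT p t ≠ 0}.Finite
  t_pre_ne : ∀ t ∈ P.transitions, ∃ p, P.flowPT p t ≠ 0
  t_post_fin : ∀ t ∈ P.transitions, {p | P.flowTP t p ≠ 0}.Finite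
  proj_init_fin : ∀ s : S, {p | P.projS p = s ∧ P.initMark p ≠ 0}.Finite
  proj_init : ∀ s : S, (∑ᶠ p ∈ {p | P.projS p = s}, P.initMark p) = N.M0 s
  proj_pre : ∀ t ∈ P.transitions, ∀ s : S,
    (∑ᶠ p ∈ {p | P.projS p = s}, P.flowPT p t) = N.pre (P.projT t) s
  proj_post : ∀ t ∈ P.transitions, ∀ s : S,
    (∑ᶠ p ∈ {p | P.projS p = s}, P.flowTP t p) = N.post (P.projT t) s

/-- The type of finite GR-processes of `N` with places in `α` and transitions
in `β`. -/
def FinProcOf {S T : Type*} (N : Net S T) (α β : Type*) :=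
  {P : RawProc S T α β // IsProcessOf N P ∧ P.FiniteProc}

/-- Partial BD-runs: `≈s*`-equivalence classes of finite GR-processes. -/
def PartialBDRun {S T : Type*} (N : Net S T) (α β : Type*) :=
  Quot (fun P Q : FinProcOf N α β => RawProc.SwapEquiv P.1 Q.1)

/-- `⟦P⟧`, the `≈s*`-equivalence class of a finite process. -/
def bdClass {S T α β : Type*} (N : Net S T) (P : FinProcOf N α β) :
    PartialBDRun N α β :=
  Quot.mk _ P

/-- The lifted prefix relation on `≈s*`-equivalence classes:
`⟦P⟧ ≤ ⟦Q⟧` iff `P ≈s* P' ≤ Q' ≈s* Q` for some `P'`, `Q'`. -/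
def bdRunLE {S T α β : Type*} (N : Net S T)
    (x y : PartialBDRun N α β) : Prop :=
  ∃ P Q : FinProcOf N α β, bdClass N P = x ∧ bdClass N Q = y ∧
    ∃ P' Q' : RawProc S T α β,
      RawProc.SwapEquiv P.1 P' ∧ RawProc.IsPrefix P' Q' ∧
      RawProc.SwapEquiv Q' Q.1

/-- A BD-run: a prefix-closed and directed set of partial BD-runs. -/
def IsBDRun {S T α β : Type*} (N : Net S T)
    (R : Set (PartialBDRun N α β)) : Prop :=
  (∀ x y, bdRunLE N x y → y ∈ R → x ∈ R) ∧
  (∀ x ∈ R, ∀ y ∈ R, ∃ z ∈ R, bdRunLE N x z ∧ bdRunLE N y z)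

/-- `⌊P⌋ = ↓{⟦P'⟧ | P' ≤ P, P' finite}`: the prefix-closure of the set of
classes of finite prefixes of the process `P`. -/
def BDify {S T α β : Type*} (N : Net S T) (P : RawProc S T α β) :
    Set (PartialBDRun N α β) :=
  { x | ∃ Q : FinProcOf N α β, RawProc.IsPrefix Q.1 P ∧ bdRunLE N x (bdClass N Q) }

/-- Swapping equivalence `P ≈s∞ Q` of (possibly infinite) processes:
`↓{⟦P'⟧ | P' ≤ P, P' finite} = ↓{⟦Q'⟧ | Q' ≤ Q, Q' finite}`. -/
def SwapEquivInf {S T α β : Type*} (N : Net S T)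
    (P Q : RawProc S T α β) : Prop :=
  BDify N P = BDify N Q

/-- A canonical carrier type, large enough to host every GR-process of a net
with places `S` and transitions `T`. -/
abbrev BigCarrier (S T : Type*) := Set ((S ⊕ T) × ℕ)

end

namespace MaxExtAux

open RawProc

variable {S T α β : Type*} {N : Net S T}

lemma isPrefix_refl (P : RawProc S T α β) : P.IsPrefix P :=
  ⟨subset_rfl, subset_rfl, rfl, fun _ _ _ _ => ⟨rfl, rfl⟩, fun _ _ => rfl, fun _ _ => rfl⟩

lemma isPrefix_trans {P Q R : RawProc S T α β} (h1 : P.IsPrefix Q) (h2 : Q.IsPrefix R) :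
    P.IsPrefix R := by
  obtain ⟨a1, b1, c1, d1, e1, f1⟩ := h1
  obtain ⟨a2, b2, c2, d2, e2, f2⟩ := h2
  refine ⟨a1.trans a2, b1.trans b2, c1.trans c2, ?_, ?_, ?_⟩
  · intro p hp t ht
    obtain ⟨u, v⟩ := d1 p hp t ht
    obtain ⟨u', v'⟩ := d2 p (a1 hp) t (b1 ht)
    exact ⟨u.trans u', v.trans v'⟩
  · intro p hp; exact (e1 p hp).trans (e2 p (a1 hp))
  · intro t ht; exact (f1 t ht).trans (f2 t (b1 ht))

lemma flowPT_mono {Q R : RawProc S T α β} (hQ : IsProcessOf N Q) (hQR : Q.IsPrefix R)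
    {p t} (h : Q.flowPT p t ≠ 0) : R.flowPT p t = Q.flowPT p t := by
  obtain ⟨hp, ht⟩ := hQ.flowPT_dom p t h
  exact (hQR.2.2.2.1 p hp t ht).1.symm

lemma flowTP_mono {Q R : RawProc S T α β} (hQ : IsProcessOf N Q) (hQR : Q.IsPrefix R)
    {t p} (h : Q.flowTP t p ≠ 0) : R.flowTP t p = Q.flowTP t p := by
  obtain ⟨hp, ht⟩ := hQ.flowTP_dom t p h
  exact (hQR.2.2.2.1 p hp t ht).2.symm

lemma flowRel_mono {Q R : RawProc S T α β} (hQ : IsProcessOf N Q) (hQR : Q.IsPrefix R)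
    {x y} (h : Q.flowRel x y) : R.flowRel x y := by
  cases x with
  | inl p => cases y with
    | inl q => exact h.elim
    | inr t =>
      have h' : Q.flowPT p t ≠ 0 := h
      show R.flowPT p t ≠ 0
      rw [flowPT_mono hQ hQR h']; exact h'
  | inr u => cases y with
    | inl q =>
      have h' : Q.flowTP u q ≠ 0 := h
      show R.flowTP u q ≠ 0
      rw [flowTP_mono hQ hQR h']; exact h'
    | inr t => exact h.elim

lemma causal_mono {Q R : RawProc S T α β} (hQ : IsProcessOf N Q) (hQR : Q.IsPrefix R)
    {x y} (h : Q.causal x y) : R.causal x y :=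
  Relation.TransGen.mono (fun _ _ hr => flowRel_mono hQ hQR hr) _ _ h

/-- The preset of a transition of `Q` cannot change in an extension `R`. -/
lemma pre_stable {Q R : RawProc S T α β} (hQ : IsProcessOf N Q) (hR : IsProcessOf N R)
    (hQR : Q.IsPrefix R) {t} (ht : t ∈ Q.transitions) (p : α) :
    R.flowPT p t = Q.flowPT p t := by
  by_cases h : Q.flowPT p t ≠ 0
  · exact flowPT_mono hQ hQR h
  push_neg at h
  rw [h]
  by_contra hne
  have htR : t ∈ R.transitions := hQR.2.1 ht
  set s := R.projS p with hs
  have hfQ : ({q | Q.projS q = s} ∩ Function.support (fun q => Q.flowPT q t)).Finite :=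
    (hQ.t_pre_fin t ht).subset (fun q hq => hq.2)
  have hfR : ({q | R.projS q = s} ∩ Function.support (fun q => R.flowPT q t)).Finite :=
    (hR.t_pre_fin t htR).subset (fun q hq => hq.2)
  have eQ := hQ.proj_pre t ht s
  have eR := hR.proj_pre t htR s
  rw [finsum_mem_eq_sum _ hfQ] at eQ
  rw [finsum_mem_eq_sum _ hfR] at eR
  have hvals : ∀ q ∈ hfQ.toFinset, Q.flowPT q t = R.flowPT q t := by
    intro q hq
    rw [Set.Finite.mem_toFinset] at hq
    exact (flowPT_mono hQ hQR hq.2).symm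
  have hsub : insert p hfQ.toFinset ⊆ hfR.toFinset := by
    intro q hq
    rw [Finset.mem_insert] at hq
    rw [Set.Finite.mem_toFinset]
    rcases hq with rfl | hq
    · exact ⟨rfl, hne⟩
    · rw [Set.Finite.mem_toFinset] at hq
      obtain ⟨hq1, hq2⟩ := hq
      have hqQ : q ∈ Q.places := (hQ.flowPT_dom q t hq2).1
      refine ⟨?_, ?_⟩
      · show R.projS q = s
        rw [← hQR.2.2.2.2.1 q hqQ, hq1]
      · show R.flowPT q t ≠ 0
        rw [flowPT_mono hQ hQR hq2]; exact hq2
  have hpA : p ∉ hfQ.toFinset := by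
    rw [Set.Finite.mem_toFinset]
    intro hh
    exact hh.2 h
  have hle : ∑ q ∈ insert p hfQ.toFinset, R.flowPT q t ≤ ∑ q ∈ hfR.toFinset, R.flowPT q t :=
    Finset.sum_le_sum_of_subset hsub
  rw [Finset.sum_insert hpA] at hle
  have heq : ∑ q ∈ hfQ.toFinset, R.flowPT q t = ∑ q ∈ hfQ.toFinset, Q.flowPT q t :=
    Finset.sum_congr rfl (fun q hq => (hvals q hq).symm)
  rw [heq, eQ, eR, hQR.2.2.2.2.2 t ht] at hle
  omega

/-- The postset of a transition of `Q` cannot change in an extension `R`. -/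
lemma post_stable {Q R : RawProc S T α β} (hQ : IsProcessOf N Q) (hR : IsProcessOf N R)
    (hQR : Q.IsPrefix R) {t} (ht : t ∈ Q.transitions) (p : α) :
    R.flowTP t p = Q.flowTP t p := by
  by_cases h : Q.flowTP t p ≠ 0
  · exact flowTP_mono hQ hQR h
  push_neg at h
  rw [h]
  by_contra hne
  have htR : t ∈ R.transitions := hQR.2.1 ht
  set s := R.projS p with hs
  have hfQ : ({q | Q.projS q = s} ∩ Function.support (fun q => Q.flowTP t q)).Finite :=
    (hQ.t_post_fin t ht).subset (fun q hq => hq.2)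
  have hfR : ({q | R.projS q = s} ∩ Function.support (fun q => R.flowTP t q)).Finite :=
    (hR.t_post_fin t htR).subset (fun q hq => hq.2)
  have eQ := hQ.proj_post t ht s
  have eR := hR.proj_post t htR s
  rw [finsum_mem_eq_sum _ hfQ] at eQ
  rw [finsum_mem_eq_sum _ hfR] at eR
  have hvals : ∀ q ∈ hfQ.toFinset, Q.flowTP t q = R.flowTP t q := by
    intro q hq
    rw [Set.Finite.mem_toFinset] at hq
    exact (flowTP_mono hQ hQR hq.2).symm
  have hsub : insert p hfQ.toFinset ⊆ hfR.toFinset := by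
    intro q hq
    rw [Finset.mem_insert] at hq
    rw [Set.Finite.mem_toFinset]
    rcases hq with rfl | hq
    · exact ⟨rfl, hne⟩
    · rw [Set.Finite.mem_toFinset] at hq
      obtain ⟨hq1, hq2⟩ := hq
      have hqQ : q ∈ Q.places := (hQ.flowTP_dom t q hq2).1
      refine ⟨?_, ?_⟩
      · show R.projS q = s
        rw [← hQR.2.2.2.2.1 q hqQ, hq1]
      · show R.flowTP t q ≠ 0
        rw [flowTP_mono hQ hQR hq2]; exact hq2
  have hpA : p ∉ hfQ.toFinset := by
    rw [Set.Finite.mem_toFinset]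
    intro hh
    exact hh.2 h
  have hle : ∑ q ∈ insert p hfQ.toFinset, R.flowTP t q ≤ ∑ q ∈ hfR.toFinset, R.flowTP t q :=
    Finset.sum_le_sum_of_subset hsub
  rw [Finset.sum_insert hpA] at hle
  have heq : ∑ q ∈ hfQ.toFinset, R.flowTP t q = ∑ q ∈ hfQ.toFinset, Q.flowTP t q :=
    Finset.sum_congr rfl (fun q hq => (hvals q hq).symm)
  rw [heq, eQ, eR, hQR.2.2.2.2.2 t ht] at hle
  omega

/-- The producer of a place of `Q` cannot change in an extension `R`. -/
lemma producer_stable {Q R : RawProc S T α β} (hQ : IsProcessOf N Q) (hR : IsProcessOf N R)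
    (hQR : Q.IsPrefix R) {p} (hp : p ∈ Q.places) (t : β) :
    R.flowTP t p = Q.flowTP t p := by
  by_cases h : Q.flowTP t p ≠ 0
  · exact flowTP_mono hQ hQR h
  push_neg at h
  rw [h]
  by_contra hne
  by_cases hprod : ∃ u, Q.flowTP u p ≠ 0
  · obtain ⟨u, hu⟩ := hprod
    have huR : R.flowTP u p ≠ 0 := by rw [flowTP_mono hQ hQR hu]; exact hu
    have := (hR.pre_place p (hQR.1 hp)).1 (show t ∈ {v | R.flowTP v p ≠ 0} from hne) huR
    rw [this] at h
    exact hu h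
  · push_neg at hprod
    have h1 := hQ.init_one p hp hprod
    have h0 := hR.init_zero p (hQR.1 hp) ⟨t, hne⟩
    rw [hQR.2.2.1] at h1
    rw [h1] at h0
    exact one_ne_zero h0

lemma mem_of_causal {Q : RawProc S T α β} (hQ : IsProcessOf N Q) {x y} (h : Q.causal x y) :
    (∀ p, x = Sum.inl p → p ∈ Q.places) ∧ (∀ u, x = Sum.inr u → u ∈ Q.transitions) := by
  obtain ⟨z, hz, -⟩ := Relation.TransGen.head'_iff.mp h
  constructor
  · rintro p rfl
    cases z with
    | inl q => exact hz.elim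
    | inr u => exact (hQ.flowPT_dom p u hz).1
  · rintro u rfl
    cases z with
    | inl q => exact (hQ.flowTP_dom u q hz).2
    | inr v => exact hz.elim

/-- The causal past of a transition of `Q` cannot change in an extension `R`. -/
lemma causal_past_stable {Q R : RawProc S T α β} (hQ : IsProcessOf N Q)
    (hR : IsProcessOf N R) (hQR : Q.IsPrefix R) {t} (ht : t ∈ Q.transitions)
    (x : α ⊕ β) (h : R.causal x (Sum.inr t)) : Q.causal x (Sum.inr t) := by
  induction h using Relation.TransGen.head_induction_on with
  | single h =>
    rename_i a
    cases a with
    | inl p =>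
      have h' : R.flowPT p t ≠ 0 := h
      rw [pre_stable hQ hR hQR ht p] at h'
      exact Relation.TransGen.single h'
    | inr u => exact h.elim
  | head h' hpath IH =>
    rename_i a b
    have hy := mem_of_causal hQ IH
    cases a with
    | inl p =>
      cases b with
      | inl q => exact h'.elim
      | inr u =>
        have hu : u ∈ Q.transitions := hy.2 u rfl
        have hh : R.flowPT p u ≠ 0 := h'
        rw [pre_stable hQ hR hQR hu p] at hh
        exact Relation.TransGen.head (show Q.flowRel (Sum.inl p) (Sum.inr u) from hh) IH
    | inr u =>
      cases b with
      | inl q =>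
        have hq : q ∈ Q.places := hy.1 q rfl
        have hh : R.flowTP u q ≠ 0 := h'
        rw [producer_stable hQ hR hQR hq u] at hh
        exact Relation.TransGen.head (show Q.flowRel (Sum.inr u) (Sum.inl q) from hh) IH
      | inr v => exact h'.elim

variable {S T α β : Type*} {N : Net S T}

noncomputable section

/-- The union of a chain of processes (with default data from `R₀`). -/
def chainUnion (c : Set (RawProc S T α β)) (R₀ : RawProc S T α β) : RawProc S T α β where
  places := {p | ∃ A ∈ c, p ∈ A.places}
  transitions := {t | ∃ A ∈ c, t ∈ A.transitions}
  flowPT := fun p t => if h : ∃ A ∈ c, A.flowPT p t ≠ 0 then h.choose.flowPT p t else 0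
  flowTP := fun t p => if h : ∃ A ∈ c, A.flowTP t p ≠ 0 then h.choose.flowTP t p else 0
  initMark := R₀.initMark
  projS := fun p => if h : ∃ A ∈ c, p ∈ A.places then h.choose.projS p else R₀.projS p
  projT := fun t => if h : ∃ A ∈ c, t ∈ A.transitions then h.choose.projT t else R₀.projT t

end

lemma chain_bound (c : Set (RawProc S T α β))
    (hproc : ∀ A ∈ c, IsProcessOf N A)
    (hchain : ∀ A ∈ c, ∀ B ∈ c, A.IsPrefix B ∨ B.IsPrefix A)
    (R₀ : RawProc S T α β) (hR₀ : R₀ ∈ c) :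
    ∃ U : RawProc S T α β, IsProcessOf N U ∧ ∀ A ∈ c, A.IsPrefix U := by
  set U := chainUnion c R₀ with hUdef
  -- basic equalities
  have hinit : ∀ A ∈ c, A.initMark = R₀.initMark := by
    intro A hA
    rcases hchain A hA R₀ hR₀ with h | h
    · exact h.2.2.1
    · exact h.2.2.1.symm
  have hPT : ∀ A ∈ c, ∀ t ∈ A.transitions, ∀ p, U.flowPT p t = A.flowPT p t := by
    intro A hA t ht p
    show (if h : ∃ B ∈ c, B.flowPT p t ≠ 0 then h.choose.flowPT p t else 0) = A.flowPT p t
    by_cases h : ∃ B ∈ c, B.flowPT p t ≠ 0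
    · rw [dif_pos h]
      obtain ⟨hBc, hBne⟩ := h.choose_spec
      rcases hchain _ hBc A hA with hBA | hAB
      · exact (flowPT_mono (hproc _ hBc) hBA hBne).symm
      · exact (pre_stable (hproc A hA) (hproc _ hBc) hAB ht p)
    · rw [dif_neg h]
      push_neg at h
      exact (h A hA).symm
  have hTPt : ∀ A ∈ c, ∀ t ∈ A.transitions, ∀ p, U.flowTP t p = A.flowTP t p := by
    intro A hA t ht p
    show (if h : ∃ B ∈ c, B.flowTP t p ≠ 0 then h.choose.flowTP t p else 0) = A.flowTP t p
    by_cases h : ∃ B ∈ c, B.flowTP t p ≠ 0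
    · rw [dif_pos h]
      obtain ⟨hBc, hBne⟩ := h.choose_spec
      rcases hchain _ hBc A hA with hBA | hAB
      · exact (flowTP_mono (hproc _ hBc) hBA hBne).symm
      · exact (post_stable (hproc A hA) (hproc _ hBc) hAB ht p)
    · rw [dif_neg h]
      push_neg at h
      exact (h A hA).symm
  have hTPp : ∀ A ∈ c, ∀ p ∈ A.places, ∀ t, U.flowTP t p = A.flowTP t p := by
    intro A hA p hp t
    show (if h : ∃ B ∈ c, B.flowTP t p ≠ 0 then h.choose.flowTP t p else 0) = A.flowTP t p
    by_cases h : ∃ B ∈ c, B.flowTP t p ≠ 0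
    · rw [dif_pos h]
      obtain ⟨hBc, hBne⟩ := h.choose_spec
      rcases hchain _ hBc A hA with hBA | hAB
      · exact (flowTP_mono (hproc _ hBc) hBA hBne).symm
      · exact (producer_stable (hproc A hA) (hproc _ hBc) hAB hp t)
    · rw [dif_neg h]
      push_neg at h
      exact (h A hA).symm
  have hPTne : ∀ p t, U.flowPT p t ≠ 0 → ∃ A ∈ c, A.flowPT p t ≠ 0 ∧ U.flowPT p t = A.flowPT p t := by
    intro p t h
    have hd : (if h : ∃ B ∈ c, B.flowPT p t ≠ 0 then h.choose.flowPT p t else 0) ≠ 0 := h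
    by_cases hex : ∃ B ∈ c, B.flowPT p t ≠ 0
    · rw [dif_pos hex] at hd
      exact ⟨hex.choose, hex.choose_spec.1, hd, by
        show (if h : ∃ B ∈ c, B.flowPT p t ≠ 0 then h.choose.flowPT p t else 0) = _
        rw [dif_pos hex]⟩
    · rw [dif_neg hex] at hd
      exact absurd rfl hd
  have hTPne : ∀ t p, U.flowTP t p ≠ 0 → ∃ A ∈ c, A.flowTP t p ≠ 0 ∧ U.flowTP t p = A.flowTP t p := by
    intro t p h
    have hd : (if h : ∃ B ∈ c, B.flowTP t p ≠ 0 then h.choose.flowTP t p else 0) ≠ 0 := h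
    by_cases hex : ∃ B ∈ c, B.flowTP t p ≠ 0
    · rw [dif_pos hex] at hd
      exact ⟨hex.choose, hex.choose_spec.1, hd, by
        show (if h : ∃ B ∈ c, B.flowTP t p ≠ 0 then h.choose.flowTP t p else 0) = _
        rw [dif_pos hex]⟩
    · rw [dif_neg hex] at hd
      exact absurd rfl hd
  have hprojS : ∀ A ∈ c, ∀ p ∈ A.places, U.projS p = A.projS p := by
    intro A hA p hp
    show (if h : ∃ B ∈ c, p ∈ B.places then h.choose.projS p else R₀.projS p) = A.projS p
    rw [dif_pos ⟨A, hA, hp⟩]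
    obtain ⟨hBc, hBp⟩ := (⟨A, hA, hp⟩ : ∃ B ∈ c, p ∈ B.places).choose_spec
    rcases hchain _ hBc A hA with hBA | hAB
    · exact hBA.2.2.2.2.1 p hBp
    · exact (hAB.2.2.2.2.1 p hp).symm
  have hprojT : ∀ A ∈ c, ∀ t ∈ A.transitions, U.projT t = A.projT t := by
    intro A hA t ht
    show (if h : ∃ B ∈ c, t ∈ B.transitions then h.choose.projT t else R₀.projT t) = A.projT t
    rw [dif_pos ⟨A, hA, ht⟩]
    obtain ⟨hBc, hBt⟩ := (⟨A, hA, ht⟩ : ∃ B ∈ c, t ∈ B.transitions).choose_spec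
    rcases hchain _ hBc A hA with hBA | hAB
    · exact hBA.2.2.2.2.2 t hBt
    · exact (hAB.2.2.2.2.2 t ht).symm
  have hplaces : U.places = {p | ∃ A ∈ c, p ∈ A.places} := rfl
  have htrans : U.transitions = {t | ∃ A ∈ c, t ∈ A.transitions} := rfl
  have hedge : ∀ x y, U.flowRel x y → ∃ A ∈ c, A.flowRel x y := by
    intro x y h
    cases x with
    | inl p => cases y with
      | inl q => exact h.elim
      | inr t =>
        obtain ⟨A, hA, hne, -⟩ := hPTne p t h
        exact ⟨A, hA, hne⟩
    | inr u => cases y with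
      | inl q =>
        obtain ⟨A, hA, hne, -⟩ := hTPne u q h
        exact ⟨A, hA, hne⟩
      | inr t => exact h.elim
  have hcausal : ∀ x y, U.causal x y → ∃ A ∈ c, A.causal x y := by
    intro x y h
    induction h with
    | single h =>
      obtain ⟨A, hA, hr⟩ := hedge _ _ h
      exact ⟨A, hA, Relation.TransGen.single hr⟩
    | tail h1 h2 IH =>
      obtain ⟨A, hA, hcA⟩ := IH
      obtain ⟨B, hB, hrB⟩ := hedge _ _ h2
      rcases hchain A hA B hB with hAB | hBA
      · exact ⟨B, hB, Relation.TransGen.tail (causal_mono (hproc A hA) hAB hcA) hrB⟩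
      · exact ⟨A, hA, Relation.TransGen.tail hcA (flowRel_mono (hproc B hB) hBA hrB)⟩
  have hpast : ∀ A ∈ c, ∀ t ∈ A.transitions, ∀ x, U.causal x (Sum.inr t) →
      A.causal x (Sum.inr t) := by
    intro A hA t ht x h
    obtain ⟨B, hB, hBc⟩ := hcausal _ _ h
    rcases hchain B hB A hA with hBA | hAB
    · exact causal_mono (hproc B hB) hBA hBc
    · exact causal_past_stable (hproc A hA) (hproc B hB) hAB ht x hBc
  have hU : IsProcessOf N U := by
    constructor
    -- flowPT_dom
    · intro p t h
      obtain ⟨A, hA, hne, -⟩ := hPTne p t h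
      obtain ⟨hp, ht⟩ := (hproc A hA).flowPT_dom p t hne
      exact ⟨⟨A, hA, hp⟩, ⟨A, hA, ht⟩⟩
    -- flowTP_dom
    · intro t p h
      obtain ⟨A, hA, hne, -⟩ := hTPne t p h
      obtain ⟨hp, ht⟩ := (hproc A hA).flowTP_dom t p hne
      exact ⟨⟨A, hA, hp⟩, ⟨A, hA, ht⟩⟩
    -- initMark_dom
    · intro p hp
      have hpR : p ∉ R₀.places := fun h => hp ⟨R₀, hR₀, h⟩
      exact (hproc R₀ hR₀).initMark_dom p hpR
    -- pre_place
    · rintro p ⟨A, hA, hpA⟩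
      constructor
      · intro t ht t' ht'
        have h1 : A.flowTP t p ≠ 0 := by rw [← hTPp A hA p hpA t]; exact ht
        have h2 : A.flowTP t' p ≠ 0 := by rw [← hTPp A hA p hpA t']; exact ht'
        exact ((hproc A hA).pre_place p hpA).1 h1 h2
      · intro t
        show U.flowTP t p ≤ 1
        rw [hTPp A hA p hpA t]
        exact ((hproc A hA).pre_place p hpA).2 t
    -- post_place
    · rintro p ⟨A, hA, hpA⟩
      constructor
      · intro t ht t' ht'
        obtain ⟨B, hB, hBne, -⟩ := hPTne p t ht
        obtain ⟨B', hB', hB'ne, -⟩ := hPTne p t' ht'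
        rcases hchain B hB B' hB' with hle | hle
        · have h1 : B'.flowPT p t ≠ 0 := by
            rw [flowPT_mono (hproc B hB) hle hBne]; exact hBne
          exact ((hproc B' hB').post_place p ((hproc B' hB').flowPT_dom p t h1).1).1 h1 hB'ne
        · have h2 : B.flowPT p t' ≠ 0 := by
            rw [flowPT_mono (hproc B' hB') hle hB'ne]; exact hB'ne
          exact ((hproc B hB).post_place p ((hproc B hB).flowPT_dom p t hBne).1).1 hBne h2
      · intro t
        by_cases h : U.flowPT p t = 0
        · rw [h]; exact Nat.zero_le 1
        · obtain ⟨B, hB, hBne, heq⟩ := hPTne p t h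
          rw [heq]
          exact ((hproc B hB).post_place p ((hproc B hB).flowPT_dom p t hBne).1).2 t
    -- init_one
    · rintro p ⟨A, hA, hpA⟩ hnoprod
      have : ∀ t, A.flowTP t p = 0 := by
        intro t
        rw [← hTPp A hA p hpA t]
        exact hnoprod t
      have h1 := (hproc A hA).init_one p hpA this
      show R₀.initMark p = 1
      rw [← hinit A hA]
      exact h1
    -- init_zero
    · rintro p ⟨A, hA, hpA⟩ ⟨t, ht⟩
      obtain ⟨B, hB, hBne, -⟩ := hTPne t p ht
      have h0 := (hproc B hB).init_zero p ((hproc B hB).flowTP_dom t p hBne).1 ⟨t, hBne⟩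
      show R₀.initMark p = 0
      rw [← hinit B hB]
      exact h0
    -- acyclic
    · intro x hx
      obtain ⟨A, hA, hc⟩ := hcausal x x hx
      exact (hproc A hA).acyclic x hc
    -- finite_past
    · rintro t ⟨A, hA, htA⟩
      exact ((hproc A hA).finite_past t htA).subset
        (fun u hu => hpast A hA t htA _ hu)
    -- t_pre_fin
    · rintro t ⟨A, hA, htA⟩
      refine ((hproc A hA).t_pre_fin t htA).subset ?_
      intro p h
      show A.flowPT p t ≠ 0
      rw [← hPT A hA t htA p]
      exact h
    -- t_pre_ne
    · rintro t ⟨A, hA, htA⟩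
      obtain ⟨p, hp⟩ := (hproc A hA).t_pre_ne t htA
      exact ⟨p, by rw [hPT A hA t htA p]; exact hp⟩
    -- t_post_fin
    · rintro t ⟨A, hA, htA⟩
      refine ((hproc A hA).t_post_fin t htA).subset ?_
      intro p h
      show A.flowTP t p ≠ 0
      rw [← hTPt A hA t htA p]
      exact h
    -- proj_init_fin
    · intro s
      refine ((hproc R₀ hR₀).proj_init_fin s).subset ?_
      rintro p ⟨h1, h2⟩
      have h2' : R₀.initMark p ≠ 0 := h2
      have hpR : p ∈ R₀.places := by
        by_contra hh
        exact h2' ((hproc R₀ hR₀).initMark_dom p hh)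
      refine ⟨?_, h2'⟩
      rw [← hprojS R₀ hR₀ p hpR]
      exact h1
    -- proj_init
    · intro s
      have hbase := (hproc R₀ hR₀).proj_init s
      have hsupp : {p | U.projS p = s} ∩ Function.support R₀.initMark
          = {p | R₀.projS p = s} ∩ Function.support R₀.initMark := by
        ext p
        simp only [Set.mem_inter_iff, Function.mem_support, Set.mem_setOf_eq]
        constructor <;> rintro ⟨h1, h2⟩
        · have hpR : p ∈ R₀.places := by
            by_contra hh
            exact h2 ((hproc R₀ hR₀).initMark_dom p hh)
          rw [← hprojS R₀ hR₀ p hpR]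
          exact ⟨h1, h2⟩
        · have hpR : p ∈ R₀.places := by
            by_contra hh
            exact h2 ((hproc R₀ hR₀).initMark_dom p hh)
          rw [hprojS R₀ hR₀ p hpR]
          exact ⟨h1, h2⟩
      calc (∑ᶠ p ∈ {p | U.projS p = s}, U.initMark p)
          = ∑ᶠ p ∈ {p | U.projS p = s} ∩ Function.support R₀.initMark, R₀.initMark p :=
            (finsum_mem_inter_support _ _).symm
        _ = ∑ᶠ p ∈ {p | R₀.projS p = s} ∩ Function.support R₀.initMark, R₀.initMark p := by
            rw [hsupp]
        _ = ∑ᶠ p ∈ {p | R₀.projS p = s}, R₀.initMark p := finsum_mem_inter_support _ _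
        _ = N.M0 s := hbase
    -- proj_pre
    · rintro t ⟨A, hA, htA⟩ s
      have hbase := (hproc A hA).proj_pre t htA s
      have h1 : (∑ᶠ p ∈ {p | U.projS p = s}, U.flowPT p t)
          = ∑ᶠ p ∈ {p | U.projS p = s}, A.flowPT p t :=
        finsum_mem_congr rfl (fun p _ => hPT A hA t htA p)
      have hsupp : {p | U.projS p = s} ∩ Function.support (fun p => A.flowPT p t)
          = {p | A.projS p = s} ∩ Function.support (fun p => A.flowPT p t) := by
        ext p
        simp only [Set.mem_inter_iff, Function.mem_support, Set.mem_setOf_eq]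
        constructor <;> rintro ⟨hh1, hh2⟩
        · have hpA : p ∈ A.places := ((hproc A hA).flowPT_dom p t hh2).1
          rw [← hprojS A hA p hpA]
          exact ⟨hh1, hh2⟩
        · have hpA : p ∈ A.places := ((hproc A hA).flowPT_dom p t hh2).1
          rw [hprojS A hA p hpA]
          exact ⟨hh1, hh2⟩
      rw [hprojT A hA t htA, h1, ← finsum_mem_inter_support, hsupp,
        finsum_mem_inter_support]
      exact hbase
    -- proj_post
    · rintro t ⟨A, hA, htA⟩ s
      have hbase := (hproc A hA).proj_post t htA s
      have h1 : (∑ᶠ p ∈ {p | U.projS p = s}, U.flowTP t p)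
          = ∑ᶠ p ∈ {p | U.projS p = s}, A.flowTP t p :=
        finsum_mem_congr rfl (fun p _ => hTPt A hA t htA p)
      have hsupp : {p | U.projS p = s} ∩ Function.support (fun p => A.flowTP t p)
          = {p | A.projS p = s} ∩ Function.support (fun p => A.flowTP t p) := by
        ext p
        simp only [Set.mem_inter_iff, Function.mem_support, Set.mem_setOf_eq]
        constructor <;> rintro ⟨hh1, hh2⟩
        · have hpA : p ∈ A.places := ((hproc A hA).flowTP_dom t p hh2).1
          rw [← hprojS A hA p hpA]
          exact ⟨hh1, hh2⟩
        · have hpA : p ∈ A.places := ((hproc A hA).flowTP_dom t p hh2).1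
          rw [hprojS A hA p hpA]
          exact ⟨hh1, hh2⟩
      rw [hprojT A hA t htA, h1, ← finsum_mem_inter_support, hsupp,
        finsum_mem_inter_support]
      exact hbase
  refine ⟨U, hU, ?_⟩
  intro A hA
  refine ⟨fun p hp => ⟨A, hA, hp⟩, fun t ht => ⟨A, hA, ht⟩, (hinit A hA), ?_, ?_, ?_⟩
  · intro p hp t ht
    exact ⟨(hPT A hA t ht p).symm, (hTPt A hA t ht p).symm⟩
  · intro p hp
    exact (hprojS A hA p hp).symm
  · intro t ht
    exact (hprojT A hA t ht).symm

end MaxExtAux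

/-- Lemma 8 of the paper: every GR-process `P` of `N` is a
prefix of a maximal GR-process of `N`, i.e. of one without proper extension. -/
theorem exists_maximal_extension {S T α β : Type*} (N : Net S T)
    (P : RawProc S T α β) (hP : IsProcessOf N P) :
    ∃ Q : RawProc S T α β, IsProcessOf N Q ∧ RawProc.IsPrefix P Q ∧
      ∀ R : RawProc S T α β, IsProcessOf N R →
        RawProc.IsPrefix Q R → RawProc.IsPrefix R Q := by
  obtain ⟨m, hm⟩ :
      ∃ m : {R : RawProc S T α β // IsProcessOf N R ∧ RawProc.IsPrefix P R},
        ∀ a : {R : RawProc S T α β // IsProcessOf N R ∧ RawProc.IsPrefix P R},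
          RawProc.IsPrefix m.1 a.1 → RawProc.IsPrefix a.1 m.1 := by
    refine exists_maximal_of_chains_bounded ?_ (fun h1 h2 => MaxExtAux.isPrefix_trans h1 h2)
    intro c hc
    by_cases hne : c.Nonempty
    · obtain ⟨A₀, hA₀⟩ := hne
      obtain ⟨U, hU, hub⟩ := MaxExtAux.chain_bound (Subtype.val '' c)
        (by rintro A ⟨a, ha, rfl⟩; exact a.2.1)
        (by
          rintro A ⟨a, ha, rfl⟩ B ⟨b, hb, rfl⟩
          by_cases hab : a = b
          · subst hab; exact Or.inl (MaxExtAux.isPrefix_refl _)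
          · exact hc ha hb hab)
        A₀.1 ⟨A₀, hA₀, rfl⟩
      have hPU : RawProc.IsPrefix P U :=
        MaxExtAux.isPrefix_trans A₀.2.2 (hub A₀.1 ⟨A₀, hA₀, rfl⟩)
      exact ⟨⟨U, hU, hPU⟩, fun a ha => hub a.1 ⟨a, ha, rfl⟩⟩
    · exact ⟨⟨P, hP, MaxExtAux.isPrefix_refl P⟩,
        fun a ha => absurd ⟨a, ha⟩ hne⟩
  refine ⟨m.1, m.2.1, m.2.2, ?_⟩
  intro R hR hmR
  exact hm ⟨R, hR, MaxExtAux.isPrefix_trans m.2.2 hmR⟩ hmR
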